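/- Let E : ℝ×ℝ → ℝ be C², bounded together with its first and second partial derivatives, and let (x(t), v(t)) solve x'(t) = v(t), v'(t) = E(x(t), t), x(T) = x₀, v(T) = v₀ on [T−h₀, T]. Fix C₀ > 0 and suppose for each 0 < h ≤ h₀ a number Ẽ(h) satisfies |Ẽ(h) − E(x₀, T)| ≤ C₀·h². Define x⁽¹⁾ = x₀ − v₀·h, v⁽¹⁾ = v₀ − E(x₀, T−h)·h, and the second-order approximations x⁽²⁾ = x₀ − (h/2)·(v₀ + v⁽¹⁾) and v⁽²⁾ = v₀ − (h/2)·(E(x⁽¹⁾, T−h) + Ẽ(h)). Then there exists C > 0 such that for all 0 < h ≤ h₀, |x(T−h) − x⁽²⁾| ≤ C·h³ and |v(T−h) − v⁽²⁾| ≤ C·h³. -/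

import Mathlib

open Set

lemma abs_le_of_deriv_le' {f f' B B' : ℝ → ℝ} {a b : ℝ}
    (hf : ∀ t ∈ Set.Icc a b, HasDerivAt f (f' t) t)
    (hB : ∀ t, HasDerivAt B (B' t) t)
    (ha : |f a| ≤ B a)
    (bound : ∀ t ∈ Set.Icc a b, |f' t| ≤ B' t) :
    ∀ t ∈ Set.Icc a b, |f t| ≤ B t := by
  intro t ht
  have := image_norm_le_of_norm_deriv_right_le_deriv_boundary
    (f := f) (f' := f') (a := a) (b := b) (B := B) (B' := B')
    (fun s hs => (hf s hs).continuousAt.continuousWithinAt)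
    (fun s hs => (hf s (Set.mem_Icc_of_Ico hs)).hasDerivWithinAt)
    (by simpa [Real.norm_eq_abs] using ha) hB
    (fun s hs => by simpa [Real.norm_eq_abs] using bound s (Set.mem_Icc_of_Ico hs))
  simpa [Real.norm_eq_abs] using this ht

lemma taylor3' {f f1 f2 f3 : ℝ → ℝ} {b K : ℝ} (hb : 0 ≤ b)
    (h1 : ∀ t ∈ Set.Icc (0:ℝ) b, HasDerivAt f (f1 t) t)
    (h2 : ∀ t ∈ Set.Icc (0:ℝ) b, HasDerivAt f1 (f2 t) t)
    (h3 : ∀ t ∈ Set.Icc (0:ℝ) b, HasDerivAt f2 (f3 t) t)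
    (hbd : ∀ t ∈ Set.Icc (0:ℝ) b, |f3 t| ≤ K) :
    |f b - f 0 - b * f1 0 - b ^ 2 / 2 * f2 0| ≤ K * b ^ 3 / 6 := by
  have step2 : ∀ t ∈ Set.Icc (0:ℝ) b, |f2 t - f2 0| ≤ K * t := by
    refine abs_le_of_deriv_le' (f' := f3) (B' := fun _ => K) ?_ ?_ ?_ hbd
    · intro t ht; exact (h3 t ht).sub_const _
    · intro t; simpa using (hasDerivAt_id t).const_mul K
    · simp
  have step1 : ∀ t ∈ Set.Icc (0:ℝ) b, |f1 t - f1 0 - t * f2 0| ≤ K * t ^ 2 / 2 := by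
    refine abs_le_of_deriv_le' (f' := fun t => f2 t - f2 0)
      (B := fun t => K * t ^ 2 / 2) (B' := fun t => K * t) ?_ ?_ ?_ step2
    · intro t ht
      exact (((h2 t ht).sub_const (f1 0)).sub ((hasDerivAt_id t).mul_const (f2 0))).congr_deriv (by ring)
    · intro t
      have := ((hasDerivAt_pow 2 t).const_mul K).div_const 2
      refine this.congr_deriv ?_
      push_cast; ring
    · simp
  have step0 : ∀ t ∈ Set.Icc (0:ℝ) b,
      |f t - f 0 - t * f1 0 - t ^ 2 / 2 * f2 0| ≤ K * t ^ 3 / 6 := by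
    refine abs_le_of_deriv_le' (f' := fun t => f1 t - f1 0 - t * f2 0)
      (B := fun t => K * t ^ 3 / 6) (B' := fun t => K * t ^ 2 / 2) ?_ ?_ ?_ step1
    · intro t ht
      have := (((h1 t ht).sub_const (f 0)).sub ((hasDerivAt_id t).mul_const (f1 0))).sub
        (((hasDerivAt_pow 2 t).div_const 2).mul_const (f2 0))
      refine this.congr_deriv ?_
      push_cast; ring
    · intro t
      have := ((hasDerivAt_pow 3 t).const_mul K).div_const 6
      refine this.congr_deriv ?_
      push_cast; ring
    · simp
  exact step0 b ⟨hb, le_rfl⟩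

set_option maxHeartbeats 1000000 in
/-- Second-order predictor-corrector characteristic tracing for the backward problem
`x' = v`, `v' = E(x, t)`, `x T = x₀`, `v T = v₀` is locally third-order accurate,
provided the predicted field value `Ẽ(h)` at time `T` is `O(h²)` accurate. -/
theorem second_order_characteristic_tracing
    (E : ℝ × ℝ → ℝ) (hE : ContDiff ℝ 2 E)
    (M : ℝ) (hM : ∀ i : ℕ, i ≤ 2 → ∀ p : ℝ × ℝ, ‖iteratedFDeriv ℝ i E p‖ ≤ M)
    (T h₀ x₀ v₀ : ℝ) (hh₀ : 0 < h₀)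
    (x v : ℝ → ℝ)
    (hx : ∀ t ∈ Set.Icc (T - h₀) T, HasDerivAt x (v t) t)
    (hv : ∀ t ∈ Set.Icc (T - h₀) T, HasDerivAt v (E (x t, t)) t)
    (hxT : x T = x₀) (hvT : v T = v₀)
    (C₀ : ℝ) (hC₀ : 0 < C₀)
    (Etilde : ℝ → ℝ)
    (hEtilde : ∀ h : ℝ, 0 < h → h ≤ h₀ → |Etilde h - E (x₀, T)| ≤ C₀ * h ^ 2) :
    ∃ C > 0, ∀ h : ℝ, 0 < h → h ≤ h₀ →
      |x (T - h) - (x₀ - h / 2 * (v₀ + (v₀ - E (x₀, T - h) * h)))| ≤ C * h ^ 3 ∧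
      |v (T - h) - (v₀ - h / 2 * (E (x₀ - v₀ * h, T - h) + Etilde h))| ≤ C * h ^ 3 := by
  have hM0 : 0 ≤ M := le_trans (norm_nonneg _) (hM 0 (by norm_num) (0, 0))
  have hEd : Differentiable ℝ E := hE.differentiable (by norm_num)
  set E' : ℝ × ℝ → (ℝ × ℝ) →L[ℝ] ℝ := fderiv ℝ E with hE'def
  have hE'cd : ContDiff ℝ 1 E' := hE.fderiv_right (by norm_num)
  have hE'd : Differentiable ℝ E' := hE'cd.differentiable (by norm_num)
  set E'' : ℝ × ℝ → (ℝ × ℝ) →L[ℝ] (ℝ × ℝ) →L[ℝ] ℝ := fderiv ℝ E' with hE''def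
  have hEb : ∀ p, |E p| ≤ M := fun p => by
    have := hM 0 (by norm_num) p
    rwa [norm_iteratedFDeriv_zero, Real.norm_eq_abs] at this
  have hE'b : ∀ p, ‖E' p‖ ≤ M := fun p => by
    have h1 : ‖E' p‖ = ‖iteratedFDeriv ℝ (0 + 1) E p‖ := by
      rw [← norm_iteratedFDeriv_fderiv, norm_iteratedFDeriv_zero]
    rw [h1]
    simpa using hM 1 (by norm_num) p
  have hE''b : ∀ p, ‖E'' p‖ ≤ M := fun p => by
    have h1 : ‖E'' p‖ = ‖iteratedFDeriv ℝ (0 + 1) E' p‖ := by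
      rw [← norm_iteratedFDeriv_fderiv, norm_iteratedFDeriv_zero]
    have h2 : ‖iteratedFDeriv ℝ (1 + 1) E p‖ ≤ M := by
      simpa using hM 2 (by norm_num) p
    rw [h1, hE'def]
    calc ‖iteratedFDeriv ℝ (0 + 1) (fderiv ℝ E) p‖
        = ‖iteratedFDeriv ℝ 1 (fderiv ℝ E) p‖ := by rw [zero_add]
      _ = ‖iteratedFDeriv ℝ (1 + 1) E p‖ := norm_iteratedFDeriv_fderiv
      _ ≤ M := h2
  have hElip : ∀ p q : ℝ × ℝ, |E p - E q| ≤ M * ‖p - q‖ := fun p q => by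
    have := convex_univ.norm_image_sub_le_of_norm_fderiv_le (f := E)
      (fun z _ => hEd z) (fun z _ => hE'b z) (Set.mem_univ q) (Set.mem_univ p)
    simpa [Real.norm_eq_abs] using this
  have hE'lip : ∀ p q : ℝ × ℝ, ‖E' p - E' q‖ ≤ M * ‖p - q‖ := fun p q => by
    have := convex_univ.norm_image_sub_le_of_norm_fderiv_le (f := E')
      (fun z _ => hE'd z) (fun z _ => hE''b z) (Set.mem_univ q) (Set.mem_univ p)
    simpa using this
  have hTay : ∀ p u : ℝ × ℝ, |E (p + u) - E p - E' p u| ≤ M * ‖u‖ * ‖u‖ := by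
    intro p u
    have hc : Convex ℝ (Metric.closedBall p ‖u‖) := convex_closedBall p ‖u‖
    have hxs : p ∈ Metric.closedBall p ‖u‖ := Metric.mem_closedBall_self (norm_nonneg u)
    have hys : p + u ∈ Metric.closedBall p ‖u‖ := by
      simp [Metric.mem_closedBall, dist_eq_norm]
    have key := hc.norm_image_sub_le_of_norm_fderiv_le' (f := E) (φ := E' p) (C := M * ‖u‖)
      (fun z _ => hEd z)
      (fun z hz => by
        have h2 : ‖z - p‖ ≤ ‖u‖ := by
          simpa [Metric.mem_closedBall, dist_eq_norm] using hz
        exact (hE'lip z p).trans (mul_le_mul_of_nonneg_left h2 hM0))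
      hxs hys
    simpa [add_sub_cancel_left, Real.norm_eq_abs] using key
  -- backward derivatives
  have hmem : ∀ s ∈ Icc (0:ℝ) h₀, T - s ∈ Icc (T - h₀) T := by
    intro s hs
    exact ⟨by linarith [hs.2], by linarith [hs.1]⟩
  have hneg : ∀ s : ℝ, HasDerivAt (fun s : ℝ => T - s) (-1) s := fun s => by
    simpa using (hasDerivAt_id s).const_sub T
  have hX' : ∀ s ∈ Icc (0:ℝ) h₀, HasDerivAt (fun s => x (T - s)) (-v (T - s)) s := by
    intro s hs
    exact ((hx (T - s) (hmem s hs)).comp s (hneg s)).congr_deriv (by ring)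
  have hV' : ∀ s ∈ Icc (0:ℝ) h₀,
      HasDerivAt (fun s => v (T - s)) (-E (x (T - s), T - s)) s := by
    intro s hs
    exact ((hv (T - s) (hmem s hs)).comp s (hneg s)).congr_deriv (by ring)
  have hP' : ∀ s ∈ Icc (0:ℝ) h₀,
      HasDerivAt (fun s => ((x (T - s) : ℝ), T - s)) (-v (T - s), -1) s := by
    intro s hs
    exact (hX' s hs).prodMk (hneg s)
  have keyL : ∀ (L : (ℝ × ℝ) →L[ℝ] ℝ) (a : ℝ), L (-a, -1) = -(L (a, 1)) := by
    intro L a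
    have : ((-a, (-1:ℝ)) : ℝ × ℝ) = -((a, 1) : ℝ × ℝ) := by simp
    rw [this, map_neg]
  have keyL2 : ∀ (L : (ℝ × ℝ) →L[ℝ] (ℝ × ℝ) →L[ℝ] ℝ) (a : ℝ) (w : ℝ × ℝ),
      L (-a, -1) w = -(L (a, 1) w) := by
    intro L a w
    have : ((-a, (-1:ℝ)) : ℝ × ℝ) = -((a, 1) : ℝ × ℝ) := by simp
    rw [this, map_neg, ContinuousLinearMap.neg_apply]
  have hG' : ∀ s ∈ Icc (0:ℝ) h₀,
      HasDerivAt (fun s => E (x (T - s), T - s))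
        (-(E' (x (T - s), T - s) (v (T - s), 1))) s := by
    intro s hs
    have := (hEd (x (T - s), T - s)).hasFDerivAt.comp_hasDerivAt s (hP' s hs)
    rw [← hE'def, keyL] at this
    exact this
  have hG1' : ∀ s ∈ Icc (0:ℝ) h₀,
      HasDerivAt (fun s => E' (x (T - s), T - s) (v (T - s), 1))
        (-((E'' (x (T - s), T - s) (v (T - s), 1)) (v (T - s), 1)
            + E' (x (T - s), T - s) (E (x (T - s), T - s), 0))) s := by
    intro s hs
    have hA : HasDerivAt (fun s => E' (x (T - s), T - s))
        (E'' (x (T - s), T - s) (-v (T - s), -1)) s := by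
      have := (hE'd (x (T - s), T - s)).hasFDerivAt.comp_hasDerivAt s (hP' s hs)
      rw [← hE''def] at this
      exact this
    have hw : HasDerivAt (fun s => ((v (T - s) : ℝ), (1:ℝ)))
        (-E (x (T - s), T - s), 0) s := (hV' s hs).prodMk (hasDerivAt_const s 1)
    have := hA.clm_apply hw
    refine this.congr_deriv ?_
    rw [keyL2]
    have h0 : ((-E (x (T - s), T - s), (0:ℝ)) : ℝ × ℝ)
        = -((E (x (T - s), T - s), (0:ℝ)) : ℝ × ℝ) := by simp
    rw [h0, map_neg]
    ring
  -- bound on |v|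
  have hVb : ∀ s ∈ Icc (0:ℝ) h₀, |v (T - s)| ≤ |v₀| + M * h₀ := by
    have base := abs_le_of_deriv_le' (f := fun s => v (T - s))
      (f' := fun s => -E (x (T - s), T - s))
      (B := fun s => |v₀| + M * s) (B' := fun _ => M) hV'
      (fun t => by simpa using ((hasDerivAt_id t).const_mul M).const_add |v₀|)
      (by simp [hvT])
      (fun t ht => by simpa [abs_neg] using hEb (x (T - t), T - t))
    intro s hs
    refine (base s hs).trans ?_
    have h2 := mul_le_mul_of_nonneg_left hs.2 hM0
    linarith
  set Mw : ℝ := |v₀| + M * h₀ + 1 with hMwdef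
  have hMw0 : 1 ≤ Mw := by
    rw [hMwdef]
    have h1 := abs_nonneg v₀
    have h2 := mul_nonneg hM0 hh₀.le
    linarith
  have hwnorm : ∀ s ∈ Icc (0:ℝ) h₀, ‖((v (T - s) : ℝ), (1:ℝ))‖ ≤ Mw := by
    intro s hs
    rw [Prod.norm_def]
    refine max_le ?_ ?_
    · rw [Real.norm_eq_abs]
      have := hVb s hs
      simp only [hMwdef]
      linarith
    · simpa using hMw0
  set Kx : ℝ := M * Mw with hKxdef
  set Kv : ℝ := M * Mw * Mw + M * M with hKvdef
  have hMwnn : 0 ≤ Mw := by linarith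
  have hKx0 : 0 ≤ Kx := mul_nonneg hM0 hMwnn
  have hKv0 : 0 ≤ Kv := by
    rw [hKvdef]
    have := mul_nonneg (mul_nonneg hM0 hMwnn) hMwnn
    have := mul_nonneg hM0 hM0
    linarith
  have hG1b : ∀ s ∈ Icc (0:ℝ) h₀,
      |E' (x (T - s), T - s) (v (T - s), 1)| ≤ Kx := by
    intro s hs
    have h1 : |E' (x (T - s), T - s) (v (T - s), 1)|
        ≤ ‖E' (x (T - s), T - s)‖ * ‖((v (T - s) : ℝ), (1:ℝ))‖ := by
      rw [← Real.norm_eq_abs]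
      exact (E' (x (T - s), T - s)).le_opNorm _
    refine h1.trans ?_
    rw [hKxdef]
    exact mul_le_mul (hE'b _) (hwnorm s hs) (norm_nonneg _) hM0
  have hG2b : ∀ s ∈ Icc (0:ℝ) h₀,
      |(E'' (x (T - s), T - s) (v (T - s), 1)) (v (T - s), 1)
        + E' (x (T - s), T - s) (E (x (T - s), T - s), 0)| ≤ Kv := by
    intro s hs
    have hw := hwnorm s hs
    have t1 : |(E'' (x (T - s), T - s) (v (T - s), 1)) (v (T - s), 1)| ≤ M * Mw * Mw := by
      rw [← Real.norm_eq_abs]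
      calc ‖(E'' (x (T - s), T - s) (v (T - s), 1)) (v (T - s), 1)‖
          ≤ ‖E'' (x (T - s), T - s) (v (T - s), 1)‖ * ‖((v (T - s) : ℝ), (1:ℝ))‖ :=
            (E'' (x (T - s), T - s) (v (T - s), 1)).le_opNorm _
        _ ≤ (M * Mw) * Mw := by
            refine mul_le_mul ?_ hw (norm_nonneg _) (by positivity)
            calc ‖E'' (x (T - s), T - s) (v (T - s), 1)‖
                ≤ ‖E'' (x (T - s), T - s)‖ * ‖((v (T - s) : ℝ), (1:ℝ))‖ :=
                  (E'' (x (T - s), T - s)).le_opNorm _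
              _ ≤ M * Mw := mul_le_mul (hE''b _) hw (norm_nonneg _) hM0
    have t2 : |E' (x (T - s), T - s) (E (x (T - s), T - s), 0)| ≤ M * M := by
      rw [← Real.norm_eq_abs]
      calc ‖E' (x (T - s), T - s) (E (x (T - s), T - s), 0)‖
          ≤ ‖E' (x (T - s), T - s)‖ * ‖((E (x (T - s), T - s) : ℝ), (0:ℝ))‖ :=
            (E' (x (T - s), T - s)).le_opNorm _
        _ ≤ M * M := by
            refine mul_le_mul (hE'b _) ?_ (norm_nonneg _) hM0
            rw [Prod.norm_def]
            refine max_le ?_ (by simpa using hM0)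
            rw [Real.norm_eq_abs]; exact hEb _
    calc |(E'' (x (T - s), T - s) (v (T - s), 1)) (v (T - s), 1)
        + E' (x (T - s), T - s) (E (x (T - s), T - s), 0)|
        ≤ |(E'' (x (T - s), T - s) (v (T - s), 1)) (v (T - s), 1)|
          + |E' (x (T - s), T - s) (E (x (T - s), T - s), 0)| := abs_add_le _ _
      _ ≤ M * Mw * Mw + M * M := add_le_add t1 t2
  refine ⟨Kx / 6 + M / 2 + (Kv / 6 + M * (|v₀| + 1) ^ 2 / 2 + C₀ / 2) + 1, by
    have := mul_nonneg hM0 (sq_nonneg (|v₀| + 1))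
    linarith, ?_⟩
  intro h hh hh0
  have hsub : Icc (0:ℝ) h ⊆ Icc (0:ℝ) h₀ := Set.Icc_subset_Icc le_rfl hh0
  have hh3 : (0:ℝ) < h ^ 3 := by positivity
  -- Taylor expansion for x
  have Tx := taylor3' (f := fun s => x (T - s)) (f1 := fun s => -v (T - s))
      (f2 := fun s => E (x (T - s), T - s))
      (f3 := fun s => -(E' (x (T - s), T - s) (v (T - s), 1))) hh.le
      (fun t ht => hX' t (hsub ht))
      (fun t ht => by exact ((hV' t (hsub ht)).neg).congr_deriv (neg_neg _))
      (fun t ht => hG' t (hsub ht))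
      (fun t ht => by simp only [abs_neg]; exact hG1b t (hsub ht))
  simp only [sub_zero, hxT, hvT] at Tx
  -- Taylor expansion for v
  have Tv := taylor3' (f := fun s => v (T - s)) (f1 := fun s => -E (x (T - s), T - s))
      (f2 := fun s => E' (x (T - s), T - s) (v (T - s), 1))
      (f3 := fun s => -((E'' (x (T - s), T - s) (v (T - s), 1)) (v (T - s), 1)
          + E' (x (T - s), T - s) (E (x (T - s), T - s), 0))) hh.le
      (fun t ht => hV' t (hsub ht))
      (fun t ht => by exact ((hG' t (hsub ht)).neg).congr_deriv (neg_neg _))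
      (fun t ht => hG1' t (hsub ht))
      (fun t ht => by simp only [abs_neg]; exact hG2b t (hsub ht))
  simp only [sub_zero, hxT, hvT] at Tv
  -- field Lipschitz in time
  have hlip1 : |E (x₀, T) - E (x₀, T - h)| ≤ M * h := by
    have key := hElip (x₀, T) (x₀, T - h)
    have h1 : ((x₀, T) : ℝ × ℝ) - (x₀, T - h) = (0, h) := by
      rw [Prod.mk_sub_mk]; norm_num
    have h2 : ‖((0:ℝ), h)‖ = h := by
      rw [Prod.norm_def]
      simp only [norm_zero, Real.norm_eq_abs, abs_of_pos hh]
      exact max_eq_right hh.le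
    rw [h1, h2] at key
    exact key
  -- quadratic Taylor of the field
  have hu : ‖((-(v₀ * h), -h) : ℝ × ℝ)‖ ≤ (|v₀| + 1) * h := by
    rw [Prod.norm_def]
    refine max_le ?_ ?_
    · rw [Real.norm_eq_abs, abs_neg, abs_mul, abs_of_pos hh]
      nlinarith [abs_nonneg v₀]
    · rw [Real.norm_eq_abs, abs_neg, abs_of_pos hh]
      nlinarith [abs_nonneg v₀]
  have hpu : ((x₀, T) : ℝ × ℝ) + (-(v₀ * h), -h) = (x₀ - v₀ * h, T - h) := by
    rw [Prod.mk_add_mk]; norm_num [sub_eq_add_neg]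
  have hquad : |E (x₀ - v₀ * h, T - h) - E (x₀, T) - E' (x₀, T) (-(v₀ * h), -h)|
      ≤ M * ((|v₀| + 1) * h) * ((|v₀| + 1) * h) := by
    have key := hTay (x₀, T) (-(v₀ * h), -h)
    rw [hpu] at key
    refine key.trans ?_
    have hn : (0:ℝ) ≤ ‖((-(v₀ * h), -h) : ℝ × ℝ)‖ := norm_nonneg _
    have h2 : ‖((-(v₀ * h), -h) : ℝ × ℝ)‖ * ‖((-(v₀ * h), -h) : ℝ × ℝ)‖
        ≤ ((|v₀| + 1) * h) * ((|v₀| + 1) * h) := mul_le_mul hu hu hn (by positivity)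
    calc M * ‖((-(v₀ * h), -h) : ℝ × ℝ)‖ * ‖((-(v₀ * h), -h) : ℝ × ℝ)‖
        = M * (‖((-(v₀ * h), -h) : ℝ × ℝ)‖ * ‖((-(v₀ * h), -h) : ℝ × ℝ)‖) := by ring
      _ ≤ M * (((|v₀| + 1) * h) * ((|v₀| + 1) * h)) := mul_le_mul_of_nonneg_left h2 hM0
      _ = M * ((|v₀| + 1) * h) * ((|v₀| + 1) * h) := by ring
  have hlin : E' (x₀, T) (-(v₀ * h), -h) = -h * (E' (x₀, T) (v₀, 1)) := by
    have h1 : ((-(v₀ * h), -h) : ℝ × ℝ) = (-h) • ((v₀, 1) : ℝ × ℝ) := by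
      rw [Prod.smul_mk, smul_eq_mul, smul_eq_mul]
      norm_num [mul_comm]
    rw [h1, map_smul, smul_eq_mul]
  have hEt := hEtilde h hh hh0
  constructor
  · -- x estimate
    have ex : x (T - h) - (x₀ - h / 2 * (v₀ + (v₀ - E (x₀, T - h) * h)))
        = (x (T - h) - x₀ - h * (-v₀) - h ^ 2 / 2 * E (x₀, T))
          + (h ^ 2 / 2) * (E (x₀, T) - E (x₀, T - h)) := by ring
    calc |x (T - h) - (x₀ - h / 2 * (v₀ + (v₀ - E (x₀, T - h) * h)))|
        ≤ |x (T - h) - x₀ - h * (-v₀) - h ^ 2 / 2 * E (x₀, T)|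
          + |(h ^ 2 / 2) * (E (x₀, T) - E (x₀, T - h))| := by
          rw [ex]; exact abs_add_le _ _
      _ ≤ Kx * h ^ 3 / 6 + (h ^ 2 / 2) * (M * h) := by
          refine add_le_add Tx ?_
          rw [abs_mul, abs_of_pos (by positivity : (0:ℝ) < h ^ 2 / 2)]
          exact mul_le_mul_of_nonneg_left hlip1 (by positivity)
      _ = (Kx / 6 + M / 2) * h ^ 3 := by ring
      _ ≤ (Kx / 6 + M / 2 + (Kv / 6 + M * (|v₀| + 1) ^ 2 / 2 + C₀ / 2) + 1) * h ^ 3 := by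
          have hS := mul_nonneg hM0 (sq_nonneg (|v₀| + 1))
          refine mul_le_mul_of_nonneg_right ?_ hh3.le
          linarith
  · -- v estimate
    have ev : v (T - h) - (v₀ - h / 2 * (E (x₀ - v₀ * h, T - h) + Etilde h))
        = (v (T - h) - v₀ - h * (-E (x₀, T)) - h ^ 2 / 2 * (E' (x₀, T) (v₀, 1)))
          + (h / 2) * (E (x₀ - v₀ * h, T - h) - E (x₀, T) - E' (x₀, T) (-(v₀ * h), -h))
          + (h / 2) * (Etilde h - E (x₀, T)) := by
      rw [hlin]; ring
    calc |v (T - h) - (v₀ - h / 2 * (E (x₀ - v₀ * h, T - h) + Etilde h))|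
        ≤ |v (T - h) - v₀ - h * (-E (x₀, T)) - h ^ 2 / 2 * (E' (x₀, T) (v₀, 1))|
          + |(h / 2) * (E (x₀ - v₀ * h, T - h) - E (x₀, T) - E' (x₀, T) (-(v₀ * h), -h))|
          + |(h / 2) * (Etilde h - E (x₀, T))| := by
          rw [ev]; exact abs_add_three _ _ _
      _ ≤ Kv * h ^ 3 / 6 + (h / 2) * (M * ((|v₀| + 1) * h) * ((|v₀| + 1) * h))
          + (h / 2) * (C₀ * h ^ 2) := by
          refine add_le_add (add_le_add Tv ?_) ?_
          · rw [abs_mul, abs_of_pos (by positivity : (0:ℝ) < h / 2)]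
            exact mul_le_mul_of_nonneg_left hquad (by positivity)
          · rw [abs_mul, abs_of_pos (by positivity : (0:ℝ) < h / 2)]
            exact mul_le_mul_of_nonneg_left hEt (by positivity)
      _ = (Kv / 6 + M * (|v₀| + 1) ^ 2 / 2 + C₀ / 2) * h ^ 3 := by ring
      _ ≤ (Kx / 6 + M / 2 + (Kv / 6 + M * (|v₀| + 1) ^ 2 / 2 + C₀ / 2) + 1) * h ^ 3 := by
          refine mul_le_mul_of_nonneg_right ?_ hh3.le
          linarith
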